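/- arXiv:1011.1263 — 2 statements merged into one kernel-verified Lean document; each statement's English description precedes it below -/
import Mathlib

section
/- Fix p ∈ [1,2], an integer n ≥ 1, x ∈ ℝⁿ, and α ∈ (0,1). Suppose g₁,…,gₙ are {−1,+1}-valued random variables, each uniform and pairwise independent, and χ₁,…,χₙ are pairwise independent {0,1}-valued random variables with P[χᵢ = 1] = α, where the family (gᵢ) is independent of the family (χᵢ). Then with probability at least 7/9, |Σ_{i=1}^n gᵢχᵢxᵢ|^p ≤ 3^{2+p}·α·‖x‖_p^p. -/
open MeasureTheory ProbabilityTheory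
open scoped ENNReal NNReal

section Aux

variable {Ω : Type} [MeasurableSpace Ω] {P : Measure Ω} [IsProbabilityMeasure P]

lemma sign_integrable {f : Ω → ℝ} (hm : Measurable f)
    (hval : ∀ ω, f ω = 1 ∨ f ω = -1) : Integrable f P := by
  refine (integrable_const (1:ℝ)).mono' hm.aestronglyMeasurable (ae_of_all _ fun ω => ?_)
  rcases hval ω with h | h <;> simp [h]

lemma sign_integral_zero {f : Ω → ℝ} (hm : Measurable f)
    (hval : ∀ ω, f ω = 1 ∨ f ω = -1) (h1 : P {ω | f ω = 1} = 1/2) :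
    ∫ ω, f ω ∂P = 0 := by
  have hA : MeasurableSet {ω | f ω = 1} := hm (measurableSet_singleton 1)
  have hfe : f = fun ω => 2 * Set.indicator {ω | f ω = 1} (fun _ => (1:ℝ)) ω - 1 := by
    funext ω
    rcases hval ω with h | h
    · have : ω ∈ {ω | f ω = 1} := h
      simp [Set.indicator_of_mem this, h]; norm_num
    · have : ω ∉ {ω | f ω = 1} := by simp [h]; norm_num
      simp [Set.indicator_of_notMem this, h]
  rw [hfe]
  have hind : Integrable (Set.indicator {ω | f ω = 1} (fun _ => (1:ℝ))) P :=
    (integrable_const (1:ℝ)).indicator hA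
  rw [integral_sub ((hind.const_mul 2)) (integrable_const 1), integral_const_mul 2,
    integral_indicator_const _ hA, integral_const]
  simp [measureReal_def, h1]

lemma markov_strict {f : Ω → ℝ} (h0 : ∀ ω, 0 ≤ f ω) (hint : Integrable f P)
    {ε : ℝ} (hε : 0 < ε) :
    P {ω | ε < f ω} ≤ ENNReal.ofReal ((∫ ω, f ω ∂P) / ε) := by
  have h := mul_meas_ge_le_integral_of_nonneg (μ := P) (ae_of_all _ h0) hint ε
  have h2 : P {ω | ε < f ω} ≤ P {ω | ε ≤ f ω} := by
    apply measure_mono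
    intro ω hω
    exact le_of_lt (show ε < f ω from hω)
  have hne : P {ω | ε ≤ f ω} ≠ ⊤ := measure_ne_top _ _
  have h3 : (P {ω | ε ≤ f ω}).toReal ≤ (∫ ω, f ω ∂P) / ε := by
    rw [le_div_iff₀ hε]; rw [measureReal_def] at h; linarith [h]
  calc P {ω | ε < f ω} ≤ P {ω | ε ≤ f ω} := h2
    _ = ENNReal.ofReal (P {ω | ε ≤ f ω}).toReal := (ENNReal.ofReal_toReal hne).symm
    _ ≤ ENNReal.ofReal ((∫ ω, f ω ∂P) / ε) := ENNReal.ofReal_le_ofReal h3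

end Aux

lemma sum_rpow_le_rpow_sum {ι : Type*} (s : Finset ι) (f : ι → ℝ) (hf : ∀ i, 0 ≤ f i)
    {q : ℝ} (hq : 1 ≤ q) : ∑ i ∈ s, f i ^ q ≤ (∑ i ∈ s, f i) ^ q := by
  have hq0 : q ≠ 0 := by positivity
  classical
  induction s using Finset.induction with
  | empty => simp [Real.zero_rpow hq0]
  | @insert a s hnot ih =>
    rw [Finset.sum_insert hnot, Finset.sum_insert hnot]
    have hsum0 : 0 ≤ ∑ i ∈ s, f i := Finset.sum_nonneg fun i _ => hf i
    have key : f a ^ q + (∑ i ∈ s, f i) ^ q ≤ (f a + ∑ i ∈ s, f i) ^ q := by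
      have h1 := NNReal.rpow_add_rpow_le_add (p := q) (f a).toNNReal
        (∑ i ∈ s, f i).toNNReal hq
      have h2 := NNReal.rpow_le_rpow h1 (by positivity : (0:ℝ) ≤ q)
      rw [← NNReal.rpow_mul, one_div, inv_mul_cancel₀ hq0, NNReal.rpow_one] at h2
      have h3 := NNReal.coe_le_coe.2 h2
      simpa [NNReal.coe_rpow, Real.coe_toNNReal _ (hf a), Real.coe_toNNReal _ hsum0]
        using h3
    linarith [ih]

lemma sign_second_moment {Ω : Type} [MeasurableSpace Ω] {P : Measure Ω}
    [IsProbabilityMeasure P] {n : ℕ}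
    (g : Fin n → Ω → ℝ) (hgm : ∀ i, Measurable (g i))
    (hgval : ∀ i ω, g i ω = 1 ∨ g i ω = -1)
    (hgunif : ∀ i, P {ω | g i ω = 1} = 1 / 2)
    (hgpair : Pairwise fun i j => IndepFun (g i) (g j) P)
    (A : Finset (Fin n)) (x : Fin n → ℝ) :
    ∫ ω, (∑ i ∈ A, g i ω * x i) ^ 2 ∂P = ∑ i ∈ A, (x i) ^ 2 := by
  have hint : ∀ i, Integrable (g i) P := fun i => sign_integrable (hgm i) (hgval i)
  have hgg_val : ∀ i j ω, g i ω * g j ω = 1 ∨ g i ω * g j ω = -1 := by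
    intro i j ω; rcases hgval i ω with h | h <;> rcases hgval j ω with h' | h' <;>
      simp [h, h']
  have hggint : ∀ i j, Integrable (fun ω => g i ω * g j ω) P := fun i j =>
    sign_integrable ((hgm i).mul (hgm j)) (hgg_val i j)
  have key : ∀ i j, ∫ ω, g i ω * g j ω ∂P = if i = j then 1 else 0 := by
    intro i j
    by_cases h : i = j
    · subst h
      have he : (fun ω => g i ω * g i ω) = fun _ => (1:ℝ) := funext fun ω => by
        rcases hgval i ω with h | h <;> simp [h]
      simp only [if_pos rfl]
      rw [show (∫ ω, g i ω * g i ω ∂P) = ∫ _, (1:ℝ) ∂P from by rw [← he]]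
      simp
    · simp only [if_neg h]
      have hmul := (hgpair h).integral_mul_eq_mul_integral (hint i).1 (hint j).1
      have : ∫ ω, g i ω * g j ω ∂P = integral P (g i * g j) := rfl
      rw [this, hmul, sign_integral_zero (hgm i) (hgval i) (hgunif i)]
      ring
  have expand : ∀ ω, (∑ i ∈ A, g i ω * x i) ^ 2
      = ∑ i ∈ A, ∑ j ∈ A, (x i * x j) * (g i ω * g j ω) := by
    intro ω
    rw [sq, Finset.sum_mul_sum]
    apply Finset.sum_congr rfl; intro i _
    apply Finset.sum_congr rfl; intro j _
    ring
  simp_rw [expand]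
  rw [integral_finset_sum _ fun i _ => integrable_finset_sum _
    fun j _ => (hggint i j).const_mul _]
  have : ∀ i ∈ A, ∫ ω, ∑ j ∈ A, (x i * x j) * (g i ω * g j ω) ∂P
      = ∑ j ∈ A, (x i * x j) * (if i = j then 1 else 0) := by
    intro i _
    rw [integral_finset_sum _ fun j _ => (hggint i j).const_mul _]
    exact Finset.sum_congr rfl fun j _ => by rw [integral_const_mul, key i j]
  rw [Finset.sum_congr rfl this]
  apply Finset.sum_congr rfl
  intro i hi
  rw [Finset.sum_eq_single i]
  · simp [sq]
  · intro j _ hj; simp [Ne.symm hj]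
  · intro h; exact absurd hi h

/-- For `p ∈ [1,2]`, pairwise independent uniform signs `gᵢ` and pairwise independent
`{0,1}`-valued `χᵢ` with `P[χᵢ = 1] = α`, where the family `(gᵢ)` is independent of the
family `(χᵢ)`, with probability at least `7/9` one has
`|Σᵢ gᵢ χᵢ xᵢ|^p ≤ 3^{2+p} α ‖x‖_p^p`. -/
theorem rpow_randomized_sum_le_whp (p : ℝ) (hp : p ∈ Set.Icc (1 : ℝ) 2)
    (n : ℕ) (hn : 1 ≤ n) (x : Fin n → ℝ) (α : ℝ) (hα : α ∈ Set.Ioo (0 : ℝ) 1)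
    {Ω : Type} [MeasurableSpace Ω] (P : Measure Ω) [IsProbabilityMeasure P]
    (g χ : Fin n → Ω → ℝ)
    (hgm : ∀ i, Measurable (g i)) (hχm : ∀ i, Measurable (χ i))
    (hgval : ∀ i ω, g i ω = 1 ∨ g i ω = -1)
    (hχval : ∀ i ω, χ i ω = 0 ∨ χ i ω = 1)
    (hgunif : ∀ i, P {ω | g i ω = 1} = 1 / 2)
    (hχprob : ∀ i, P {ω | χ i ω = 1} = ENNReal.ofReal α)
    (hgpair : Pairwise fun i j => IndepFun (g i) (g j) P)
    (hχpair : Pairwise fun i j => IndepFun (χ i) (χ j) P)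
    (hfam : IndepFun (fun ω i => g i ω) (fun ω i => χ i ω) P) :
    (7 : ℝ≥0∞) / 9 ≤
      P {ω | |∑ i, g i ω * χ i ω * x i| ^ p ≤ 3 ^ (2 + p) * α * ∑ i, |x i| ^ p} := by
  obtain ⟨hp1, hp2⟩ := hp
  obtain ⟨hα0, hα1⟩ := hα
  have hppos : (0:ℝ) < p := lt_of_lt_of_le one_pos hp1
  have hpne : p ≠ 0 := ne_of_gt hppos
  have hc0 : (0:ℝ) ≤ ∑ i, |x i| ^ p :=
    Finset.sum_nonneg fun i _ => Real.rpow_nonneg (abs_nonneg _) p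
  set c := ∑ i, |x i| ^ p with hc
  by_cases hxz : c = 0
  · -- trivial case : x = 0
    have hxi : ∀ i, x i = 0 := by
      intro i
      have h1 : |x i| ^ p = 0 :=
        (Finset.sum_eq_zero_iff_of_nonneg
          (fun i _ => Real.rpow_nonneg (abs_nonneg _) p)).mp hxz i (Finset.mem_univ i)
      by_contra hne
      have : (0:ℝ) < |x i| ^ p := Real.rpow_pos_of_pos (abs_pos.mpr hne) p
      linarith
    have huniv : {ω | |∑ i, g i ω * χ i ω * x i| ^ p ≤ 3 ^ (2 + p) * α * c}
        = Set.univ := by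
      ext ω
      simp only [Set.mem_setOf_eq, Set.mem_univ, iff_true]
      have hs : ∑ i, g i ω * χ i ω * x i = 0 :=
        Finset.sum_eq_zero fun i _ => by rw [hxi i]; ring
      rw [hs, hxz]
      simp [Real.zero_rpow hpne]
    rw [huniv, measure_univ]
    refine ENNReal.div_le_of_le_mul ?_
    norm_num
  · have hcpos : 0 < c := lt_of_le_of_ne hc0 (Ne.symm hxz)
    have hχnn : ∀ i ω, (0:ℝ) ≤ χ i ω := fun i ω => by
      rcases hχval i ω with h | h <;> simp [h]
    -- key real quantities
    set E1 : Set Ω := {ω | ∑ i, χ i ω * |x i| ^ p ≤ 9 * (α * c)} with hE1def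
    set Bad : Set Ω := {ω | 9 * (∑ i, χ i ω * (x i)^2) < (∑ i, g i ω * χ i ω * x i)^2}
      with hBaddef
    have hTpm : Measurable fun ω => ∑ i, χ i ω * |x i| ^ p :=
      Finset.measurable_sum _ fun i _ => (hχm i).mul_const _
    have hT2m : Measurable fun ω => ∑ i, χ i ω * (x i)^2 :=
      Finset.measurable_sum _ fun i _ => (hχm i).mul_const _
    have hSm : Measurable fun ω => ∑ i, g i ω * χ i ω * x i :=
      Finset.measurable_sum _ fun i _ => (((hgm i).mul (hχm i)).mul_const _)
    have hE1 : MeasurableSet E1 := measurableSet_le hTpm measurable_const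
    have hBad : MeasurableSet Bad :=
      measurableSet_lt (measurable_const.mul hT2m) (hSm.pow_const 2)
    -- Step A : Markov bound for E1ᶜ
    have hχint : ∀ i, Integrable (χ i) P := fun i =>
      (integrable_const (1:ℝ)).mono' (hχm i).aestronglyMeasurable
        (ae_of_all _ fun ω => by rcases hχval i ω with h | h <;> simp [h])
    have hχexp : ∀ i, ∫ ω, χ i ω ∂P = α := by
      intro i
      have hA : MeasurableSet {ω | χ i ω = 1} := hχm i (measurableSet_singleton 1)
      have hfe : χ i = Set.indicator {ω | χ i ω = 1} (fun _ => (1:ℝ)) := by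
        funext ω
        rcases hχval i ω with h | h
        · have hnm : ω ∉ {ω | χ i ω = 1} := by simp [h]
          simp [Set.indicator_of_notMem hnm, h]
        · simp [Set.indicator_of_mem (show ω ∈ {ω | χ i ω = 1} from h), h]
      rw [hfe, integral_indicator_const _ hA, measureReal_def, hχprob i]
      simp [ENNReal.toReal_ofReal hα0.le]
    have hTpint : Integrable (fun ω => ∑ i, χ i ω * |x i| ^ p) P :=
      integrable_finset_sum _ fun i _ => (hχint i).mul_const _
    have hTpE : ∫ ω, ∑ i, χ i ω * |x i| ^ p ∂P = α * c := by
      rw [integral_finset_sum _ fun i _ => (hχint i).mul_const _]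
      have : ∀ i ∈ Finset.univ, (∫ ω, χ i ω * |x i| ^ p ∂P) = α * |x i| ^ p := by
        intro i _
        rw [integral_mul_const, hχexp i]
      rw [Finset.sum_congr rfl this, ← Finset.mul_sum, hc]
    have hstepA : P E1ᶜ ≤ ENNReal.ofReal (1/9) := by
      have hEc : E1ᶜ = {ω | 9 * (α * c) < ∑ i, χ i ω * |x i| ^ p} := by
        ext ω; simp [hE1def, not_le]
      rw [hEc]
      have hmk := markov_strict (P := P)
        (fun ω => Finset.sum_nonneg fun i _ =>
          mul_nonneg (hχnn i ω) (Real.rpow_nonneg (abs_nonneg _) p))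
        hTpint (by positivity : (0:ℝ) < 9 * (α * c))
      rw [hTpE] at hmk
      convert hmk using 2
      rw [eq_div_iff (by positivity : (9:ℝ) * (α * c) ≠ 0)]
      ring
    -- Step B : partition bound for Bad
    have hstepB : P Bad ≤ ENNReal.ofReal (1/9) := by
      classical
      set v : Finset (Fin n) → ℝ := fun A => ∑ i ∈ A, (x i)^2 with hv
      set SA : Finset (Fin n) → Set (Fin n → ℝ) :=
        fun A => {a | 9 * v A < (∑ i ∈ A, a i * x i)^2} with hSA
      set BA : Finset (Fin n) → Set (Fin n → ℝ) :=
        fun A => ⋂ i, (fun b : Fin n → ℝ => b i) ⁻¹' {if i ∈ A then (1:ℝ) else 0}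
        with hBA
      have hSAm : ∀ A, MeasurableSet (SA A) := fun A =>
        measurableSet_lt measurable_const
          ((Finset.measurable_sum _ fun i _ =>
            (measurable_pi_apply i).mul_const _).pow_const 2)
      have hBAm : ∀ A, MeasurableSet (BA A) := fun A =>
        MeasurableSet.iInter fun i =>
          (measurable_pi_apply i) (measurableSet_singleton _)
      have hcov : ∀ ω : Ω, (fun ω i => χ i ω) ω ∈
          BA (Finset.univ.filter fun i => χ i ω = 1) := by
        intro ω
        simp only [hBA, Set.mem_iInter, Set.mem_preimage, Set.mem_singleton_iff]
        intro i
        rcases hχval i ω with h | h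
        · have : i ∉ Finset.univ.filter fun i => χ i ω = 1 := by
            simp [Finset.mem_filter, h]
          simp [this, h]
        · have : i ∈ Finset.univ.filter fun i => χ i ω = 1 := by
            simp [Finset.mem_filter, h]
          simp [this, h]
      have hsubU : Bad ⊆ ⋃ A : Finset (Fin n),
          ((fun ω i => g i ω) ⁻¹' SA A ∩ (fun ω i => χ i ω) ⁻¹' BA A) := by
        intro ω hω
        refine Set.mem_iUnion.2 ⟨Finset.univ.filter fun i => χ i ω = 1, ?_, hcov ω⟩
        have hT2A : ∑ i, χ i ω * (x i)^2
            = v (Finset.univ.filter fun i => χ i ω = 1) := by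
          show _ = ∑ i ∈ Finset.univ.filter (fun i => χ i ω = 1), (x i)^2
          rw [Finset.sum_filter]
          apply Finset.sum_congr rfl
          intro i _
          rcases hχval i ω with h | h <;> simp [h]
        have hSAe : ∑ i, g i ω * χ i ω * x i
            = ∑ i ∈ Finset.univ.filter fun i => χ i ω = 1, g i ω * x i := by
          rw [Finset.sum_filter]
          apply Finset.sum_congr rfl
          intro i _
          rcases hχval i ω with h | h <;> simp [h]
        have hω' : 9 * (∑ i, χ i ω * (x i)^2) < (∑ i, g i ω * χ i ω * x i)^2 := hω
        simp only [Set.mem_preimage, hSA, Set.mem_setOf_eq]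
        rw [← hT2A, ← hSAe]
        exact hω'
      have hDle : ∀ A : Finset (Fin n),
          P ((fun ω i => g i ω) ⁻¹' SA A) ≤ ENNReal.ofReal (1/9) := by
        intro A
        by_cases hvA : v A = 0
        · have hxA : ∀ i ∈ A, x i = 0 := by
            intro i hi
            have h1 : (x i)^2 = 0 :=
              (Finset.sum_eq_zero_iff_of_nonneg (fun i _ => sq_nonneg (x i))).mp hvA i hi
            exact pow_eq_zero_iff (by norm_num) |>.mp h1
          have : SA A = ∅ := by
            ext a
            simp only [hSA, Set.mem_setOf_eq, Set.mem_empty_iff_false, iff_false, not_lt]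
            have : ∑ i ∈ A, a i * x i = 0 :=
              Finset.sum_eq_zero fun i hi => by rw [hxA i hi]; ring
            rw [this, hvA]
            norm_num
          simp [this]
        · have hvpos : 0 < v A :=
            lt_of_le_of_ne (Finset.sum_nonneg fun i _ => sq_nonneg (x i)) (Ne.symm hvA)
          have hpre : (fun ω i => g i ω) ⁻¹' SA A
              = {ω | 9 * v A < (∑ i ∈ A, g i ω * x i)^2} := rfl
          rw [hpre]
          have hintf : Integrable (fun ω => (∑ i ∈ A, g i ω * x i)^2) P := by
            refine (integrable_const ((∑ i ∈ A, |x i|)^2)).mono'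
              ((Finset.measurable_sum _ fun i _ =>
                (hgm i).mul_const _).pow_const 2).aestronglyMeasurable
              (ae_of_all _ fun ω => ?_)
            have habs : |∑ i ∈ A, g i ω * x i| ≤ ∑ i ∈ A, |x i| := by
              refine le_trans (Finset.abs_sum_le_sum_abs _ _) ?_
              apply Finset.sum_le_sum
              intro i _
              rw [abs_mul]
              rcases hgval i ω with h | h <;> simp [h]
            have h1 : (∑ i ∈ A, g i ω * x i)^2 ≤ (∑ i ∈ A, |x i|)^2 := by
              rw [← sq_abs]
              exact pow_le_pow_left₀ (abs_nonneg _) habs 2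
            have h2 : (0:ℝ) ≤ (∑ i ∈ A, g i ω * x i)^2 := sq_nonneg _
            rw [Real.norm_eq_abs, abs_of_nonneg h2]
            exact h1
          have hmk := markov_strict (P := P)
            (fun ω => sq_nonneg (∑ i ∈ A, g i ω * x i)) hintf
            (by positivity : (0:ℝ) < 9 * v A)
          rw [sign_second_moment g hgm hgval hgunif hgpair A x] at hmk
          refine le_trans hmk ?_
          apply ENNReal.ofReal_le_ofReal
          rw [div_le_iff₀ (by positivity : (0:ℝ) < 9 * v A)]
          ring_nf
          nlinarith [hvpos]
      have hdisj : Pairwise (Function.onFun Disjoint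
          fun A : Finset (Fin n) => (fun ω i => χ i ω) ⁻¹' BA A) := by
        intro A B hAB
        rw [Function.onFun, Set.disjoint_left]
        intro ω hA hB
        apply hAB
        simp only [hBA, Set.mem_preimage, Set.mem_iInter, Set.mem_singleton_iff] at hA hB
        ext i
        have h1 := hA i
        have h2 := hB i
        constructor
        · intro hiA
          by_contra hiB
          rw [if_pos hiA] at h1
          rw [if_neg hiB] at h2
          rw [h1] at h2
          norm_num at h2
        · intro hiB
          by_contra hiA
          rw [if_neg hiA] at h1
          rw [if_pos hiB] at h2
          rw [h2] at h1
          norm_num at h1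
      have hXm : Measurable (fun ω i => χ i ω) := measurable_pi_lambda _ hχm
      have hGm : Measurable (fun ω i => g i ω) := measurable_pi_lambda _ hgm
      have hunion : (⋃ A : Finset (Fin n), (fun ω i => χ i ω) ⁻¹' BA A)
          = Set.univ := by
        ext ω
        simp only [Set.mem_iUnion, Set.mem_univ, iff_true]
        exact ⟨_, hcov ω⟩
      have hsum1 : ∑ A : Finset (Fin n), P ((fun ω i => χ i ω) ⁻¹' BA A) = 1 := by
        rw [← tsum_fintype (L := .unconditional _), ← measure_iUnion hdisj fun A => hXm (hBAm A), hunion,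
          measure_univ]
      calc P Bad ≤ P (⋃ A : Finset (Fin n),
            ((fun ω i => g i ω) ⁻¹' SA A ∩ (fun ω i => χ i ω) ⁻¹' BA A)) :=
          measure_mono hsubU
        _ ≤ ∑' A : Finset (Fin n),
            P ((fun ω i => g i ω) ⁻¹' SA A ∩ (fun ω i => χ i ω) ⁻¹' BA A) :=
          measure_iUnion_le _
        _ = ∑ A : Finset (Fin n),
            P ((fun ω i => g i ω) ⁻¹' SA A) * P ((fun ω i => χ i ω) ⁻¹' BA A) := by
          rw [tsum_fintype]
          exact Finset.sum_congr rfl fun A _ =>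
            hfam.measure_inter_preimage_eq_mul _ _ (hSAm A) (hBAm A)
        _ ≤ ∑ A : Finset (Fin n),
            ENNReal.ofReal (1/9) * P ((fun ω i => χ i ω) ⁻¹' BA A) :=
          Finset.sum_le_sum fun A _ => mul_le_mul_left (hDle A) _
        _ = ENNReal.ofReal (1/9) * ∑ A : Finset (Fin n),
            P ((fun ω i => χ i ω) ⁻¹' BA A) := by rw [Finset.mul_sum]
        _ = ENNReal.ofReal (1/9) := by rw [hsum1, mul_one]
    -- Step C : inclusion
    have hsub : E1 ∩ Badᶜ ⊆
        {ω | |∑ i, g i ω * χ i ω * x i| ^ p ≤ 3 ^ (2 + p) * α * c} := by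
      rintro ω ⟨h1, h2⟩
      have h1' : ∑ i, χ i ω * |x i| ^ p ≤ 9 * (α * c) := h1
      have h2' : (∑ i, g i ω * χ i ω * x i)^2 ≤ 9 * (∑ i, χ i ω * (x i)^2) := by
        have := h2
        simp only [hBaddef, Set.mem_compl_iff, Set.mem_setOf_eq, not_lt] at this
        exact this
      have hq1 : (1:ℝ) ≤ 2 / p := (one_le_div hppos).mpr hp2
      have hT2Tp : ∑ i, χ i ω * (x i)^2
          ≤ (∑ i, χ i ω * |x i| ^ p) ^ (2/p) := by
        have hkey := sum_rpow_le_rpow_sum Finset.univ (fun i => χ i ω * |x i| ^ p)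
          (fun i => mul_nonneg (hχnn i ω) (Real.rpow_nonneg (abs_nonneg _) p)) hq1
        refine le_trans (le_of_eq ?_) hkey
        apply Finset.sum_congr rfl
        intro i _
        rcases hχval i ω with h | h
        · simp [h, Real.zero_rpow (show (2:ℝ)/p ≠ 0 from by positivity)]
        · have habs2 : (|x i| ^ p) ^ ((2:ℝ)/p) = x i ^ 2 := by
            rw [← Real.rpow_mul (abs_nonneg _),
              show p * (2/p) = ((2:ℕ):ℝ) from by push_cast; field_simp,
              Real.rpow_natCast, sq_abs]
          rw [h, one_mul, one_mul, habs2]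
      have hTpnn : (0:ℝ) ≤ ∑ i, χ i ω * |x i| ^ p :=
        Finset.sum_nonneg fun i _ =>
          mul_nonneg (hχnn i ω) (Real.rpow_nonneg (abs_nonneg _) p)
      have htpos : (0:ℝ) < 9 * (α * c) := by positivity
      have hchain : (∑ i, g i ω * χ i ω * x i)^2 ≤ 9 * (9 * (α * c)) ^ (2/p) := by
        calc (∑ i, g i ω * χ i ω * x i)^2 ≤ 9 * (∑ i, χ i ω * (x i)^2) := h2'
          _ ≤ 9 * (∑ i, χ i ω * |x i| ^ p) ^ (2/p) := by
            apply mul_le_mul_of_nonneg_left hT2Tp (by norm_num)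
          _ ≤ 9 * (9 * (α * c)) ^ (2/p) := by
            apply mul_le_mul_of_nonneg_left
              (Real.rpow_le_rpow hTpnn h1' (by positivity)) (by norm_num)
      have hRsq : (3 * (9 * (α * c)) ^ (1/p))^2 = 9 * (9 * (α * c)) ^ (2/p) := by
        have hsq : ((9 * (α * c)) ^ ((1:ℝ)/p)) ^ 2 = (9 * (α * c)) ^ ((2:ℝ)/p) := by
          rw [← Real.rpow_natCast ((9 * (α * c)) ^ ((1:ℝ)/p)) 2,
            ← Real.rpow_mul htpos.le]
          congr 1
          push_cast
          ring
        rw [mul_pow, hsq]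
        norm_num
      have habsle : |∑ i, g i ω * χ i ω * x i| ≤ 3 * (9 * (α * c)) ^ (1/p) := by
        have hR0 : (0:ℝ) ≤ 3 * (9 * (α * c)) ^ (1/p) := by positivity
        nlinarith [abs_nonneg (∑ i, g i ω * χ i ω * x i),
          sq_abs (∑ i, g i ω * χ i ω * x i), hchain, hRsq]
      have hfinal : |∑ i, g i ω * χ i ω * x i| ^ p
          ≤ (3 * (9 * (α * c)) ^ (1/p)) ^ p :=
        Real.rpow_le_rpow (abs_nonneg _) habsle hppos.le
      have hRp : (3 * (9 * (α * c)) ^ (1/p)) ^ p = 3 ^ p * (9 * (α * c)) := by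
        rw [Real.mul_rpow (by norm_num) (Real.rpow_nonneg htpos.le _),
          ← Real.rpow_mul htpos.le]
        rw [show ((1/p) * p : ℝ) = 1 by field_simp]
        rw [Real.rpow_one]
      have h3exp : (3:ℝ) ^ (2 + p) * α * c = 3 ^ p * (9 * (α * c)) := by
        rw [Real.rpow_add (by norm_num : (0:ℝ) < 3)]
        rw [show ((3:ℝ) ^ (2:ℝ)) = 9 by
          rw [show (2:ℝ) = ((2:ℕ):ℝ) from by norm_num, Real.rpow_natCast]; norm_num]
        ring
      show |∑ i, g i ω * χ i ω * x i| ^ p ≤ 3 ^ (2 + p) * α * c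
      rw [h3exp]
      calc |∑ i, g i ω * χ i ω * x i| ^ p
          ≤ (3 * (9 * (α * c)) ^ (1/p)) ^ p := hfinal
        _ = 3 ^ p * (9 * (α * c)) := hRp
    -- Step D : combine
    have h19 : ENNReal.ofReal (1/9) + ENNReal.ofReal (1/9) = ENNReal.ofReal (2/9) := by
      rw [← ENNReal.ofReal_add (by norm_num) (by norm_num)]
      norm_num
    have h29 : ENNReal.ofReal (2/9) ≤ (2:ℝ≥0∞)/9 := by
      rw [ENNReal.ofReal_div_of_pos (by norm_num)]
      simp
    have hunle : P (E1ᶜ ∪ Bad) ≤ (2:ℝ≥0∞)/9 := by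
      calc P (E1ᶜ ∪ Bad) ≤ P E1ᶜ + P Bad := measure_union_le _ _
        _ ≤ ENNReal.ofReal (1/9) + ENNReal.ofReal (1/9) := add_le_add hstepA hstepB
        _ = ENNReal.ofReal (2/9) := h19
        _ ≤ (2:ℝ≥0∞)/9 := h29
    have hcompl : (E1ᶜ ∪ Bad)ᶜ = E1 ∩ Badᶜ := by
      rw [Set.compl_union, compl_compl]
    have hmU : MeasurableSet (E1ᶜ ∪ Bad) := hE1.compl.union hBad
    have hPeq : P (E1 ∩ Badᶜ) = 1 - P (E1ᶜ ∪ Bad) := by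
      rw [← hcompl, prob_compl_eq_one_sub hmU]
    have h1eq : (1:ℝ≥0∞) = 7/9 + 2/9 := by
      rw [← ENNReal.add_div]
      norm_num
      rw [ENNReal.div_self (by norm_num) (by norm_num)]
    have h79 : (7:ℝ≥0∞)/9 = 1 - 2/9 := by
      rw [h1eq, ENNReal.add_sub_cancel_right]
      exact ne_of_lt (ENNReal.div_lt_top (by norm_num) (by norm_num))
    calc (7:ℝ≥0∞)/9 = 1 - 2/9 := h79
      _ ≤ 1 - P (E1ᶜ ∪ Bad) := tsub_le_tsub_left hunle 1
      _ = P (E1 ∩ Badᶜ) := hPeq.symm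
      _ ≤ P {ω | |∑ i, g i ω * χ i ω * x i| ^ p ≤ 3 ^ (2 + p) * α * c} :=
        measure_mono hsub
end

section
/- Fix real numbers 0 < p ≤ q ≤ 2, integers n, m ≥ 1, ω > 0, and vectors x₁,…,xₙ ∈ ℝ^m with Σ_{i=1}^n ‖xᵢ‖_q^p ≤ ω. Let α ≥ max(1, 81·ω). Suppose g₁,…,gₙ are {−1,+1}-valued random variables, each uniform and pairwise independent, and χ₁,…,χₙ are pairwise independent {0,1}-valued random variables with P[χᵢ = 1] = 1/α, where the family (gᵢ) is independent of the family (χᵢ). Then P[‖Σ_{i=1}^n gᵢχᵢxᵢ‖_q^p ≤ 1] ≥ 7/9. -/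
open MeasureTheory ProbabilityTheory
open scoped ENNReal NNReal

section Helpers
variable {β : Type*} [MeasurableSpace β] (μ : Measure β) [IsProbabilityMeasure μ]

lemma integrable_of_ae_bdd {f : β → ℝ} (hf : Measurable f) {C : ℝ}
    (hC : ∀ᵐ u ∂μ, |f u| ≤ C) : Integrable f μ :=
  Integrable.mono' (integrable_const C) hf.aestronglyMeasurable
    (by simpa [Real.norm_eq_abs] using hC)

lemma lintegral_rpow_q_le {Z : β → ℝ} (hZ : AEStronglyMeasurable Z μ) {q : ℝ}
    (hq0 : 0 < q) (hq2 : q ≤ 2) :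
    ∫⁻ u, (‖Z u‖₊ : ℝ≥0∞) ^ q ∂μ ≤ (∫⁻ u, (‖Z u‖₊ : ℝ≥0∞) ^ (2:ℝ) ∂μ) ^ (q/2) := by
  have h := eLpNorm'_le_eLpNorm'_of_exponent_le hq0 hq2 μ hZ
  have h2 := ENNReal.rpow_le_rpow h hq0.le
  rw [eLpNorm', eLpNorm', ← ENNReal.rpow_mul, ← ENNReal.rpow_mul,
    one_div_mul_cancel hq0.ne', ENNReal.rpow_one] at h2
  convert h2 using 2
  · rfl
  · rfl
  · ring

lemma real_rpow_add_le (a b : ℝ) (ha : 0 ≤ a) (hb : 0 ≤ b) {r : ℝ} (hr0 : 0 ≤ r)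
    (hr1 : r ≤ 1) : (a + b) ^ r ≤ a ^ r + b ^ r := by
  have h := NNReal.rpow_add_le_add_rpow a.toNNReal b.toNNReal hr0 hr1
  have h' := NNReal.coe_le_coe.2 h
  push_cast at h'
  rwa [Real.coe_toNNReal _ ha, Real.coe_toNNReal _ hb] at h'

lemma real_rpow_sum_le_sum_rpow {ι : Type*} (s : Finset ι) (f : ι → ℝ)
    (hf : ∀ i ∈ s, 0 ≤ f i) {r : ℝ} (hr0 : 0 < r) (hr1 : r ≤ 1) :
    (∑ i ∈ s, f i) ^ r ≤ ∑ i ∈ s, f i ^ r := by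
  classical
  induction s using Finset.cons_induction with
  | empty => simp [Real.zero_rpow hr0.ne']
  | cons a s ha ih =>
    rw [Finset.sum_cons, Finset.sum_cons]
    have hs : 0 ≤ ∑ i ∈ s, f i :=
      Finset.sum_nonneg fun i hi => hf i (Finset.mem_cons_of_mem hi)
    calc (f a + ∑ i ∈ s, f i) ^ r ≤ f a ^ r + (∑ i ∈ s, f i) ^ r :=
          real_rpow_add_le _ _ (hf a (Finset.mem_cons_self a s)) hs hr0.le hr1
      _ ≤ f a ^ r + ∑ i ∈ s, f i ^ r := by
          gcongr
          exact ih fun i hi => hf i (Finset.mem_cons_of_mem hi)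

lemma integral_pm_one {f : β → ℝ} (hf : Measurable f)
    (hval : ∀ᵐ u ∂μ, f u = 1 ∨ f u = -1)
    (hp : μ {u | f u = 1} = 1/2) : ∫ u, f u ∂μ = 0 := by
  have hA : MeasurableSet {u | f u = 1} := hf (measurableSet_singleton 1)
  have hcong : f =ᵐ[μ] fun u => Set.indicator {u | f u = 1} (fun _ => (2:ℝ)) u - 1 := by
    filter_upwards [hval] with u hu
    rcases hu with hu | hu
    · have : u ∈ {u | f u = 1} := hu
      simp [Set.indicator_of_mem this, hu]; norm_num
    · have : u ∉ {u | f u = 1} := by simp [Set.mem_setOf_eq, hu]; norm_num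
      simp [Set.indicator_of_notMem this, hu]
  rw [integral_congr_ae hcong, integral_sub ((integrable_const (2:ℝ)).indicator hA)
    (integrable_const 1), integral_indicator_const _ hA, integral_const]
  simp [Measure.real, hp, ENNReal.toReal_div]

lemma second_moment {n : ℕ} (e : Fin n → β → ℝ) (hm : ∀ i, Measurable (e i))
    (hval : ∀ i, ∀ᵐ u ∂μ, e i u = 1 ∨ e i u = -1)
    (hmean : ∀ i, ∫ u, e i u ∂μ = 0)
    (hpair : Pairwise fun i j => IndepFun (e i) (e j) μ)
    (s : Finset (Fin n)) (c : Fin n → ℝ) :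
    ∫ u, (∑ i ∈ s, c i * e i u)^2 ∂μ = ∑ i ∈ s, (c i)^2 := by
  classical
  have hint : ∀ i k : Fin n, Integrable (fun u => e i u * e k u) μ := by
    intro i k
    refine integrable_of_ae_bdd μ ((hm i).mul (hm k)) (C := 1) ?_
    filter_upwards [hval i, hval k] with u h1 h2
    rcases h1 with h1 | h1 <;> rcases h2 with h2 | h2 <;> simp [h1, h2]
  have hEE : ∀ i k : Fin n, ∫ u, e i u * e k u ∂μ = if i = k then 1 else 0 := by
    intro i k
    by_cases h : i = k
    · subst h
      rw [if_pos rfl, show (1:ℝ) = ∫ (_ : β), (1:ℝ) ∂μ by simp]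
      apply integral_congr_ae
      filter_upwards [hval i] with u h1
      rcases h1 with h1 | h1 <;> simp [h1]
    · rw [if_neg h]
      have h2 := (show IndepFun (e i) (e k) μ from hpair h).integral_mul_eq_mul_integral (hm i).aestronglyMeasurable (hm k).aestronglyMeasurable
      have : ∫ u, e i u * e k u ∂μ = integral μ (e i * e k) := rfl
      rw [this, h2, hmean i, hmean k, mul_zero]
  calc ∫ u, (∑ i ∈ s, c i * e i u)^2 ∂μ
      = ∫ u, ∑ i ∈ s, ∑ k ∈ s, (c i * c k) * (e i u * e k u) ∂μ := by
        apply integral_congr_ae; apply Filter.Eventually.of_forall; intro u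
        show (∑ i ∈ s, c i * e i u) ^ 2 = _
        rw [sq, Finset.sum_mul_sum]
        exact Finset.sum_congr rfl fun i _ => Finset.sum_congr rfl fun k _ => by ring
    _ = ∑ i ∈ s, ∑ k ∈ s, (c i * c k) * ∫ u, e i u * e k u ∂μ := by
        rw [integral_finset_sum _ (fun i _ =>
          integrable_finset_sum _ (fun k _ => ((hint i k).const_mul _)))]
        refine Finset.sum_congr rfl fun i _ => ?_
        rw [integral_finset_sum _ (fun k _ => ((hint i k).const_mul _))]
        exact Finset.sum_congr rfl fun k _ => integral_const_mul _ _
    _ = ∑ i ∈ s, ∑ k ∈ s, (c i * c k) * (if i = k then 1 else 0) := by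
        exact Finset.sum_congr rfl fun i _ => Finset.sum_congr rfl fun k _ => by rw [hEE i k]
    _ = ∑ i ∈ s, (c i)^2 := by
        refine Finset.sum_congr rfl fun i hi => ?_
        rw [Finset.sum_congr rfl (fun k (_ : k ∈ s) => by
          rw [mul_ite, mul_one, mul_zero] : ∀ k ∈ s, (c i * c k) * (if i = k then 1 else 0)
            = if i = k then c i * c k else 0)]
        rw [Finset.sum_ite_eq s i (fun k => c i * c k), if_pos hi, sq]

end Helpers

/-- Generalized `p`-type bound for `ℓ_q^m` with `0 < p ≤ q ≤ 2`: if
`Σᵢ ‖xᵢ‖_q^p ≤ ω` and `α ≥ max(1, 81 ω)`, then for pairwise independent uniform signs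
`gᵢ` and pairwise independent Bernoulli(`1/α`) variables `χᵢ` (the two families being
independent of each other), `P[‖Σᵢ gᵢ χᵢ xᵢ‖_q^p ≤ 1] ≥ 7/9`. -/
theorem generalized_type_lq_low (p q : ℝ) (hp : 0 < p) (hpq : p ≤ q) (hq : q ≤ 2)
    (n m : ℕ) (hn : 1 ≤ n) (hm : 1 ≤ m) (ω : ℝ) (hω : 0 < ω)
    (x : Fin n → Fin m → ℝ)
    (hx : ∑ i, (∑ j, |x i j| ^ q) ^ (p / q) ≤ ω)
    (α : ℝ) (hα : max 1 (81 * ω) ≤ α)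
    {Ω : Type} [MeasurableSpace Ω] (P : Measure Ω) [IsProbabilityMeasure P]
    (g χ : Fin n → Ω → ℝ)
    (hgm : ∀ i, Measurable (g i)) (hχm : ∀ i, Measurable (χ i))
    (hgval : ∀ i θ, g i θ = 1 ∨ g i θ = -1)
    (hχval : ∀ i θ, χ i θ = 0 ∨ χ i θ = 1)
    (hgunif : ∀ i, P {θ | g i θ = 1} = 1 / 2)
    (hχprob : ∀ i, P {θ | χ i θ = 1} = ENNReal.ofReal (1 / α))
    (hgpair : Pairwise fun i j => IndepFun (g i) (g j) P)
    (hχpair : Pairwise fun i j => IndepFun (χ i) (χ j) P)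
    (hfam : IndepFun (fun θ i => g i θ) (fun θ i => χ i θ) P) :
    (7 : ℝ≥0∞) / 9 ≤
      P {θ | (∑ j, |∑ i, g i θ * χ i θ * x i j| ^ q) ^ (p / q) ≤ 1} := by
  classical
  have hq0 : 0 < q := lt_of_lt_of_le hp hpq
  have hα1 : (1:ℝ) ≤ α := le_trans (le_max_left _ _) hα
  have hα0 : 0 < α := lt_of_lt_of_le one_pos hα1
  have hαω : 81 * ω ≤ α := le_trans (le_max_right _ _) hα
  have hωα : ω / α ≤ 1/81 := by
    rw [div_le_div_iff₀ hα0 (by norm_num : (0:ℝ) < 81)]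
    linarith
  set a : Fin n → ℝ := fun i => (∑ j, |x i j| ^ q) ^ (p / q) with ha_def
  have hwq_nonneg : ∀ i, 0 ≤ ∑ j, |x i j| ^ q := fun i =>
    Finset.sum_nonneg fun j _ => Real.rpow_nonneg (abs_nonneg _) q
  have ha_nonneg : ∀ i, 0 ≤ a i := fun i => Real.rpow_nonneg (hwq_nonneg i) _
  set small : Finset (Fin n) := Finset.univ.filter (fun i => a i ≤ 1) with hsmall_def
  set A : Set Ω := ⋃ i ∈ (smallᶜ : Finset (Fin n)), {θ | χ i θ = 1} with hA_def
  set Ylin : Ω → ℝ≥0∞ :=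
    fun θ => ∑ j, (‖∑ i ∈ small, g i θ * χ i θ * x i j‖₊ : ℝ≥0∞) ^ q with hY_def
  set B : Set Ω := {θ | (1:ℝ≥0∞) < Ylin θ} with hB_def
  have hSm : ∀ j, Measurable (fun θ => ∑ i ∈ small, g i θ * χ i θ * x i j) := fun j =>
    Finset.measurable_sum _ fun i _ => (((hgm i).mul (hχm i)).mul_const _)
  have hYlinm : Measurable Ylin :=
    Finset.measurable_sum _ fun j _ =>
      ((hSm j).nnnorm.coe_nnreal_ennreal).pow measurable_const
  have henn : ∀ z : ℝ, (‖z‖₊ : ℝ≥0∞) ^ q = ENNReal.ofReal (|z| ^ q) := by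
    intro z
    rw [← enorm_eq_nnnorm, ← ofReal_norm, Real.norm_eq_abs,
      ← ENNReal.ofReal_rpow_of_nonneg (abs_nonneg z) hq0.le]
  have hYofReal : ∀ θ, Ylin θ =
      ENNReal.ofReal (∑ j, |∑ i ∈ small, g i θ * χ i θ * x i j| ^ q) := by
    intro θ
    rw [hY_def, ENNReal.ofReal_sum_of_nonneg
      (fun j _ => Real.rpow_nonneg (abs_nonneg _) q)]
    exact Finset.sum_congr rfl fun j _ => henn _
  -- Claim 1 : inclusion
  have hincl : ∀ θ, θ ∉ A → θ ∉ B →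
      θ ∈ {θ | (∑ j, |∑ i, g i θ * χ i θ * x i j| ^ q) ^ (p / q) ≤ 1} := by
    intro θ hAmem hBmem
    have hzero : ∀ i ∈ (smallᶜ : Finset (Fin n)), χ i θ = 0 := by
      intro i hi
      rcases hχval i θ with h | h
      · exact h
      · exact absurd (Set.mem_biUnion hi (by exact h)) hAmem
    have hsum : ∀ j, (∑ i, g i θ * χ i θ * x i j) = ∑ i ∈ small, g i θ * χ i θ * x i j := by
      intro j
      refine (Finset.sum_subset (Finset.subset_univ small) ?_).symm
      intro i _ hi
      rw [hzero i (Finset.mem_compl.2 hi)]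
      ring
    have hle : Ylin θ ≤ 1 := not_lt.1 hBmem
    rw [hYofReal θ] at hle
    have hle' : (∑ j, |∑ i ∈ small, g i θ * χ i θ * x i j| ^ q) ≤ 1 :=
      ENNReal.ofReal_le_one.1 hle
    show (∑ j, |∑ i, g i θ * χ i θ * x i j| ^ q) ^ (p / q) ≤ 1
    have hrw : (∑ j, |∑ i, g i θ * χ i θ * x i j| ^ q)
        = ∑ j, |∑ i ∈ small, g i θ * χ i θ * x i j| ^ q :=
      Finset.sum_congr rfl fun j _ => by rw [hsum j]
    rw [hrw]
    exact Real.rpow_le_one (Finset.sum_nonneg fun j _ =>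
      Real.rpow_nonneg (abs_nonneg _) q) hle' (div_nonneg hp.le hq0.le)
  -- Claim 2 : P A
  have hcard : ((smallᶜ : Finset (Fin n)).card : ℝ) ≤ ω := by
    calc ((smallᶜ : Finset (Fin n)).card : ℝ) = ∑ _i ∈ (smallᶜ : Finset (Fin n)), (1:ℝ) := by
          simp
      _ ≤ ∑ i ∈ (smallᶜ : Finset (Fin n)), a i := by
          refine Finset.sum_le_sum fun i hi => ?_
          have hns : ¬ a i ≤ 1 := by
            intro h
            exact (Finset.mem_compl.1 hi) (Finset.mem_filter.2 ⟨Finset.mem_univ i, h⟩)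
          linarith [not_le.1 hns]
      _ ≤ ∑ i, a i := Finset.sum_le_sum_of_subset_of_nonneg (Finset.subset_univ _)
          (fun i _ _ => ha_nonneg i)
      _ ≤ ω := hx
  have hPA : P A ≤ ENNReal.ofReal (1/81) := by
    calc P A ≤ ∑ i ∈ (smallᶜ : Finset (Fin n)), P {θ | χ i θ = 1} :=
          measure_biUnion_finset_le _ _
      _ = ∑ _i ∈ (smallᶜ : Finset (Fin n)), ENNReal.ofReal (1/α) :=
          Finset.sum_congr rfl fun i _ => hχprob i
      _ = ((smallᶜ : Finset (Fin n)).card : ℝ≥0∞) * ENNReal.ofReal (1/α) := by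
          rw [Finset.sum_const, nsmul_eq_mul]
      _ = ENNReal.ofReal (((smallᶜ : Finset (Fin n)).card : ℝ) * (1/α)) := by
          rw [ENNReal.ofReal_mul (by positivity), ENNReal.ofReal_natCast]
      _ ≤ ENNReal.ofReal (1/81) := by
          apply ENNReal.ofReal_le_ofReal
          calc ((smallᶜ : Finset (Fin n)).card : ℝ) * (1/α) ≤ ω * (1/α) :=
                mul_le_mul_of_nonneg_right hcard (by positivity)
            _ = ω / α := by ring
            _ ≤ 1/81 := hωα
  -- setup for the Fubini / second moment bound
  set G : Ω → (Fin n → ℝ) := fun θ i => g i θ with hG_def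
  set X : Ω → (Fin n → ℝ) := fun θ i => χ i θ with hX_def
  have hGm : Measurable G := measurable_pi_lambda _ hgm
  have hXm : Measurable X := measurable_pi_lambda _ hχm
  set μG : Measure (Fin n → ℝ) := P.map G with hμG_def
  set μX : Measure (Fin n → ℝ) := P.map X with hμX_def
  haveI : IsProbabilityMeasure μG := Measure.isProbabilityMeasure_map hGm.aemeasurable
  haveI : IsProbabilityMeasure μX := Measure.isProbabilityMeasure_map hXm.aemeasurable
  have hprod : P.map (fun θ => (G θ, X θ)) = μG.prod μX :=
    (indepFun_iff_map_prod_eq_prod_map_map hGm.aemeasurable hXm.aemeasurable).mp hfam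
  set F : (Fin n → ℝ) × (Fin n → ℝ) → ℝ≥0∞ :=
    fun w => ∑ j, (‖∑ i ∈ small, w.1 i * w.2 i * x i j‖₊ : ℝ≥0∞) ^ q with hF_def
  have hFm : Measurable F := by
    refine Finset.measurable_sum _ fun j _ => ?_
    refine (Measurable.nnnorm ?_).coe_nnreal_ennreal.pow measurable_const
    refine Finset.measurable_sum _ fun i _ => ?_
    exact (((measurable_pi_apply i).comp measurable_fst).mul
      ((measurable_pi_apply i).comp measurable_snd)).mul_const _
  have hvae : ∀ᵐ v ∂μX, ∀ i, v i = 0 ∨ v i = 1 := by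
    have hVm : MeasurableSet {v : Fin n → ℝ | ∀ i, v i = 0 ∨ v i = 1} := by
      rw [Set.setOf_forall]
      exact MeasurableSet.iInter fun i =>
        ((measurable_pi_apply i) (measurableSet_singleton 0)).union
          ((measurable_pi_apply i) (measurableSet_singleton 1))
    rw [hμX_def]
    exact (ae_map_iff hXm.aemeasurable hVm).2 (Filter.Eventually.of_forall fun θ i => hχval i θ)
  have huae : ∀ᵐ u ∂μG, ∀ i, u i = 1 ∨ u i = -1 := by
    have hVm : MeasurableSet {u : Fin n → ℝ | ∀ i, u i = 1 ∨ u i = -1} := by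
      rw [Set.setOf_forall]
      exact MeasurableSet.iInter fun i =>
        ((measurable_pi_apply i) (measurableSet_singleton 1)).union
          ((measurable_pi_apply i) (measurableSet_singleton (-1)))
    rw [hμG_def]
    exact (ae_map_iff hGm.aemeasurable hVm).2 (Filter.Eventually.of_forall fun θ i => hgval i θ)
  have hevm : ∀ i, Measurable (fun u : Fin n → ℝ => u i) := measurable_pi_apply
  have hevval : ∀ i, ∀ᵐ u ∂μG, u i = 1 ∨ u i = -1 := by
    intro i; filter_upwards [huae] with u hu; exact hu i
  have hevp : ∀ i, μG {u : Fin n → ℝ | u i = 1} = 1/2 := by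
    intro i
    have hset : MeasurableSet {u : Fin n → ℝ | u i = 1} :=
      (hevm i) (measurableSet_singleton 1)
    rw [hμG_def, Measure.map_apply hGm hset]
    exact hgunif i
  have hevmean : ∀ i, ∫ u, u i ∂μG = 0 := fun i =>
    integral_pm_one μG (hevm i) (hevval i) (hevp i)
  have hevpair : Pairwise fun i k => IndepFun (fun u : Fin n → ℝ => u i)
      (fun u : Fin n → ℝ => u k) μG := by
    intro i k hik
    rw [indepFun_iff_measure_inter_preimage_eq_mul]
    intro s t hs ht
    rw [hμG_def, Measure.map_apply hGm (((hevm i) hs).inter ((hevm k) ht)),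
      Measure.map_apply hGm ((hevm i) hs), Measure.map_apply hGm ((hevm k) ht)]
    exact indepFun_iff_measure_inter_preimage_eq_mul.mp (hgpair hik) s t hs ht
  have hsqq : ∀ z : ℝ, (z^2) ^ (q/2) = |z| ^ q := by
    intro z
    rw [← sq_abs z, ← Real.rpow_natCast |z| 2, ← Real.rpow_mul (abs_nonneg z)]
    congr 1
    push_cast
    ring
  -- the inner (sign) bound, for fixed 0/1-valued v
  have hinner : ∀ v : Fin n → ℝ, (∀ i, v i = 0 ∨ v i = 1) →
      ∫⁻ u, F (u, v) ∂μG ≤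
        ENNReal.ofReal (∑ i ∈ small, v i * (∑ j, |x i j| ^ q)) := by
    intro v hv
    have hv0 : ∀ i, 0 ≤ v i := by
      intro i; rcases hv i with h | h <;> rw [h] <;> norm_num
    have hZm : ∀ j, Measurable (fun u : Fin n → ℝ => ∑ i ∈ small, (v i * x i j) * u i) :=
      fun j => Finset.measurable_sum _ fun i _ => (measurable_pi_apply i).const_mul _
    have hFrw : ∀ u, F (u, v) =
        ∑ j, (‖∑ i ∈ small, (v i * x i j) * u i‖₊ : ℝ≥0∞) ^ q := by
      intro u
      rw [hF_def]
      refine Finset.sum_congr rfl fun j _ => ?_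
      have hss : (∑ i ∈ small, (u, v).1 i * (u, v).2 i * x i j)
          = ∑ i ∈ small, (v i * x i j) * u i :=
        Finset.sum_congr rfl fun i _ => by ring
      rw [hss]
    have hj : ∀ j, ∫⁻ u, (‖∑ i ∈ small, (v i * x i j) * u i‖₊ : ℝ≥0∞) ^ q ∂μG ≤
        ENNReal.ofReal (∑ i ∈ small, v i * |x i j| ^ q) := by
      intro j
      have hZb : ∀ᵐ u ∂μG, |∑ i ∈ small, (v i * x i j) * u i| ≤
          ∑ i ∈ small, |v i * x i j| := by
        filter_upwards [huae] with u hu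
        calc |∑ i ∈ small, (v i * x i j) * u i| ≤ ∑ i ∈ small, |(v i * x i j) * u i| :=
              Finset.abs_sum_le_sum_abs _ _
          _ = ∑ i ∈ small, |v i * x i j| := Finset.sum_congr rfl fun i _ => by
              rcases hu i with h | h <;> rw [h] <;> simp [abs_mul]
      have hZ2m : Measurable (fun u : Fin n → ℝ =>
          (∑ i ∈ small, (v i * x i j) * u i)^2) := (hZm j).pow measurable_const
      have hZ2int : Integrable (fun u => (∑ i ∈ small, (v i * x i j) * u i)^2) μG := by
        refine integrable_of_ae_bdd μG hZ2m (C := (∑ i ∈ small, |v i * x i j|)^2) ?_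
        filter_upwards [hZb] with u hu
        rw [abs_of_nonneg (sq_nonneg _)]
        calc (∑ i ∈ small, (v i * x i j) * u i)^2
            = |∑ i ∈ small, (v i * x i j) * u i|^2 := (sq_abs _).symm
          _ ≤ (∑ i ∈ small, |v i * x i j|)^2 := pow_le_pow_left₀ (abs_nonneg _) hu 2
      have hsec : ∫ u, (∑ i ∈ small, (v i * x i j) * u i)^2 ∂μG
          = ∑ i ∈ small, (v i * x i j)^2 :=
        second_moment μG (fun i u => u i) hevm hevval hevmean hevpair small
          (fun i => v i * x i j)
      have h2 : ∫⁻ u, (‖∑ i ∈ small, (v i * x i j) * u i‖₊ : ℝ≥0∞) ^ (2:ℝ) ∂μG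
          = ENNReal.ofReal (∑ i ∈ small, (v i * x i j)^2) := by
        rw [← hsec, ofReal_integral_eq_lintegral_ofReal hZ2int
          (Filter.Eventually.of_forall fun u => sq_nonneg _)]
        refine lintegral_congr fun u => ?_
        rw [← enorm_eq_nnnorm, ← ofReal_norm, Real.norm_eq_abs,
          ENNReal.ofReal_rpow_of_nonneg (abs_nonneg _) (by norm_num : (0:ℝ) ≤ 2)]
        congr 1
        rw [show ((2:ℝ)) = ((2:ℕ):ℝ) by norm_num, Real.rpow_natCast, sq_abs]
      calc ∫⁻ u, (‖∑ i ∈ small, (v i * x i j) * u i‖₊ : ℝ≥0∞) ^ q ∂μG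
          ≤ (∫⁻ u, (‖∑ i ∈ small, (v i * x i j) * u i‖₊ : ℝ≥0∞) ^ (2:ℝ) ∂μG) ^ (q/2) :=
            lintegral_rpow_q_le μG (hZm j).aestronglyMeasurable hq0 hq
        _ = ENNReal.ofReal ((∑ i ∈ small, (v i * x i j)^2) ^ (q/2)) := by
            rw [h2, ENNReal.ofReal_rpow_of_nonneg
              (Finset.sum_nonneg fun i _ => sq_nonneg _) (by positivity)]
        _ ≤ ENNReal.ofReal (∑ i ∈ small, ((v i * x i j)^2) ^ (q/2)) :=
            ENNReal.ofReal_le_ofReal (real_rpow_sum_le_sum_rpow small _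
              (fun i _ => sq_nonneg _) (by positivity) (by linarith))
        _ = ENNReal.ofReal (∑ i ∈ small, v i * |x i j| ^ q) := by
            congr 1
            refine Finset.sum_congr rfl fun i _ => ?_
            rcases hv i with h | h
            · rw [h, zero_mul, zero_mul]
              rw [zero_pow (two_ne_zero), Real.zero_rpow (by positivity : q/2 ≠ 0)]
            · rw [h, one_mul, one_mul, hsqq]
    calc ∫⁻ u, F (u, v) ∂μG
        = ∑ j, ∫⁻ u, (‖∑ i ∈ small, (v i * x i j) * u i‖₊ : ℝ≥0∞) ^ q ∂μG := by
          rw [lintegral_congr fun u => hFrw u]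
          exact lintegral_finset_sum _ (fun j _ =>
            ((hZm j).nnnorm.coe_nnreal_ennreal).pow measurable_const)
      _ ≤ ∑ j, ENNReal.ofReal (∑ i ∈ small, v i * |x i j| ^ q) :=
          Finset.sum_le_sum fun j _ => hj j
      _ = ENNReal.ofReal (∑ j, ∑ i ∈ small, v i * |x i j| ^ q) :=
          (ENNReal.ofReal_sum_of_nonneg fun j _ => Finset.sum_nonneg fun i _ =>
            mul_nonneg (hv0 i) (Real.rpow_nonneg (abs_nonneg _) q)).symm
      _ = ENNReal.ofReal (∑ i ∈ small, v i * (∑ j, |x i j| ^ q)) := by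
          rw [Finset.sum_comm]
          congr 1
          exact Finset.sum_congr rfl fun i _ => (Finset.mul_sum _ _ _).symm
  -- single coordinate expectation under μX
  have hsingle : ∀ i : Fin n, ∫⁻ v, ENNReal.ofReal (v i * (∑ j, |x i j| ^ q)) ∂μX
      = ENNReal.ofReal (∑ j, |x i j| ^ q) * ENNReal.ofReal (1/α) := by
    intro i
    have hset : MeasurableSet {v : Fin n → ℝ | v i = 1} :=
      (measurable_pi_apply i) (measurableSet_singleton 1)
    have hcong : ∀ᵐ v ∂μX, ENNReal.ofReal (v i * (∑ j, |x i j| ^ q))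
        = ENNReal.ofReal (∑ j, |x i j| ^ q) *
          Set.indicator {v : Fin n → ℝ | v i = 1} (fun _ => (1:ℝ≥0∞)) v := by
      filter_upwards [hvae] with v hv
      rcases hv i with h | h
      · have hnot : v ∉ {v : Fin n → ℝ | v i = 1} := by
          simp [Set.mem_setOf_eq, h]
        rw [Set.indicator_of_notMem hnot, mul_zero, h, zero_mul, ENNReal.ofReal_zero]
      · have hmem : v ∈ {v : Fin n → ℝ | v i = 1} := h
        rw [Set.indicator_of_mem hmem, mul_one, h, one_mul]
    rw [lintegral_congr_ae hcong,
      lintegral_const_mul _ (measurable_const.indicator hset)]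
    congr 1
    have hind : ∫⁻ v, Set.indicator {v : Fin n → ℝ | v i = 1} (fun _ => (1:ℝ≥0∞)) v ∂μX
        = μX {v : Fin n → ℝ | v i = 1} := by
      rw [lintegral_indicator hset]
      simp
    rw [hind, hμX_def, Measure.map_apply hXm hset]
    exact hχprob i
  -- expectation bound
  have hsmall_wq : ∑ i ∈ small, (∑ j, |x i j| ^ q) ≤ ω := by
    have hwa : ∀ i ∈ small, (∑ j, |x i j| ^ q) ≤ a i := by
      intro i hi
      have hai : a i ≤ 1 := (Finset.mem_filter.1 hi).2
      rcases eq_or_lt_of_le (ha_nonneg i) with h0 | h0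
      · have hwq0 : (∑ j, |x i j| ^ q) = 0 := by
          by_contra hne
          have hpos : 0 < ∑ j, |x i j| ^ q := lt_of_le_of_ne (hwq_nonneg i) (Ne.symm hne)
          have : 0 < a i := Real.rpow_pos_of_pos hpos _
          rw [← h0] at this
          exact lt_irrefl _ this
        rw [hwq0]
        exact ha_nonneg i
      · have hwq_eq : (a i) ^ (q/p) = ∑ j, |x i j| ^ q := by
          simp only [ha_def]
          rw [← Real.rpow_mul (hwq_nonneg i), show p/q * (q/p) = 1 by field_simp,
            Real.rpow_one]
        rw [← hwq_eq]
        calc (a i) ^ (q/p) ≤ (a i) ^ (1:ℝ) :=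
              Real.rpow_le_rpow_of_exponent_ge h0 hai
                (by rw [le_div_iff₀ hp]; linarith)
          _ = a i := Real.rpow_one _
    calc ∑ i ∈ small, (∑ j, |x i j| ^ q) ≤ ∑ i ∈ small, a i := Finset.sum_le_sum hwa
      _ ≤ ∑ i, a i := Finset.sum_le_sum_of_subset_of_nonneg (Finset.subset_univ _)
          (fun i _ _ => ha_nonneg i)
      _ ≤ ω := hx
  have hEY : ∫⁻ θ, Ylin θ ∂P ≤ ENNReal.ofReal (1/81) := by
    calc ∫⁻ θ, Ylin θ ∂P
        = ∫⁻ w, F w ∂(μG.prod μX) := by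
          rw [← hprod, lintegral_map hFm (hGm.prodMk hXm)]
      _ = ∫⁻ v, ∫⁻ u, F (u, v) ∂μG ∂μX := lintegral_prod_symm' F hFm
      _ ≤ ∫⁻ v, ENNReal.ofReal (∑ i ∈ small, v i * (∑ j, |x i j| ^ q)) ∂μX := by
          refine lintegral_mono_ae ?_
          filter_upwards [hvae] with v hv
          exact hinner v hv
      _ = ∫⁻ v, ∑ i ∈ small, ENNReal.ofReal (v i * (∑ j, |x i j| ^ q)) ∂μX := by
          refine lintegral_congr_ae ?_
          filter_upwards [hvae] with v hv
          exact ENNReal.ofReal_sum_of_nonneg fun i _ => mul_nonneg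
            (by rcases hv i with h | h <;> rw [h] <;> norm_num) (hwq_nonneg i)
      _ = ∑ i ∈ small, ∫⁻ v, ENNReal.ofReal (v i * (∑ j, |x i j| ^ q)) ∂μX :=
          lintegral_finset_sum _ (fun i _ =>
            ((measurable_pi_apply i).mul_const _).ennreal_ofReal)
      _ = ∑ i ∈ small, ENNReal.ofReal ((∑ j, |x i j| ^ q) * (1/α)) := by
          refine Finset.sum_congr rfl fun i _ => ?_
          rw [hsingle i, ← ENNReal.ofReal_mul (hwq_nonneg i)]
      _ = ENNReal.ofReal (∑ i ∈ small, (∑ j, |x i j| ^ q) * (1/α)) :=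
          (ENNReal.ofReal_sum_of_nonneg fun i _ =>
            mul_nonneg (hwq_nonneg i) (by positivity)).symm
      _ ≤ ENNReal.ofReal (1/81) := by
          apply ENNReal.ofReal_le_ofReal
          rw [← Finset.sum_mul]
          calc (∑ i ∈ small, (∑ j, |x i j| ^ q)) * (1/α) ≤ ω * (1/α) :=
                mul_le_mul_of_nonneg_right hsmall_wq (by positivity)
            _ = ω / α := by ring
            _ ≤ 1/81 := hωα
  have hPB : P B ≤ ENNReal.ofReal (1/81) := by
    calc P B ≤ P {θ | (1:ℝ≥0∞) ≤ Ylin θ} := by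
          apply measure_mono
          intro θ h
          simp only [hB_def, Set.mem_setOf_eq] at h
          exact le_of_lt h
      _ ≤ (∫⁻ θ, Ylin θ ∂P) / 1 :=
          meas_ge_le_lintegral_div hYlinm.aemeasurable one_ne_zero ENNReal.one_ne_top
      _ = ∫⁻ θ, Ylin θ ∂P := by simp
      _ ≤ ENNReal.ofReal (1/81) := hEY
  -- final arithmetic
  set E : Set Ω := {θ | (∑ j, |∑ i, g i θ * χ i θ * x i j| ^ q) ^ (p / q) ≤ 1} with hE_def
  have hcover : (1:ℝ≥0∞) ≤ P E + (P A + P B) := by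
    have hsub : (Set.univ : Set Ω) ⊆ E ∪ (A ∪ B) := by
      intro θ _
      by_cases hA' : θ ∈ A
      · exact Or.inr (Or.inl hA')
      by_cases hB' : θ ∈ B
      · exact Or.inr (Or.inr hB')
      · exact Or.inl (hincl θ hA' hB')
    calc (1:ℝ≥0∞) = P Set.univ := measure_univ.symm
      _ ≤ P (E ∪ (A ∪ B)) := measure_mono hsub
      _ ≤ P E + P (A ∪ B) := measure_union_le _ _
      _ ≤ P E + (P A + P B) := add_le_add_right (measure_union_le _ _) _
  have hc : P A + P B ≤ ENNReal.ofReal (2/81) := by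
    calc P A + P B ≤ ENNReal.ofReal (1/81) + ENNReal.ofReal (1/81) := add_le_add hPA hPB
      _ = ENNReal.ofReal (2/81) := by
          rw [← ENNReal.ofReal_add (by norm_num) (by norm_num)]
          norm_num
  have hc_top : P A + P B ≠ ⊤ := ne_top_of_le_ne_top ENNReal.ofReal_ne_top hc
  have h79 : (7:ℝ≥0∞)/9 = ENNReal.ofReal (7/9) := by
    rw [ENNReal.ofReal_div_of_pos (by norm_num)]
    norm_num
  have hmain : (7:ℝ≥0∞)/9 + (P A + P B) ≤ P E + (P A + P B) := by
    calc (7:ℝ≥0∞)/9 + (P A + P B) ≤ ENNReal.ofReal (7/9) + ENNReal.ofReal (2/81) :=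
          add_le_add (le_of_eq h79) hc
      _ = ENNReal.ofReal (7/9 + 2/81) := by
          rw [← ENNReal.ofReal_add (by norm_num) (by norm_num)]
      _ ≤ 1 := by
          rw [show (1:ℝ≥0∞) = ENNReal.ofReal 1 by simp]
          exact ENNReal.ofReal_le_ofReal (by norm_num)
      _ ≤ P E + (P A + P B) := hcover
  exact (ENNReal.add_le_add_iff_right hc_top).mp hmain
end
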